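/- Let L_act, L, M be positive natural numbers with M ≤ L_act, let A be an L_act×L complex matrix (A : Matrix (Fin L_act) (Fin L) ℂ) with A.rank = L_act, and let σ : Fin M → Fin L_act be an injective function. Then the set of L×M complex matrices Z for which the M×M submatrix of A * Z formed by the rows indexed by σ fails to be invertible, i.e., {Z : Matrix (Fin L) (Fin M) ℂ | ¬ IsUnit ((A * Z).submatrix σ id)}, has Lebesgue measure (volume) zero. -/

import Mathlib

open MeasureTheory

noncomputable instance matrixMeasureSpace {n m : Type*} [Fintype n] [Fintype m] :
    MeasureSpace (Matrix n m ℂ) :=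
  inferInstanceAs (MeasureSpace (n → m → ℂ))

/-- The zero set of a nonzero one-variable polynomial over `ℂ` is null. -/
lemma poly_one_var_null (p : Polynomial ℂ) (hp : p ≠ 0) :
    volume {z : ℂ | Polynomial.eval z p = 0} = 0 :=
  (Polynomial.finite_setOf_isRoot hp).measure_zero _

open MvPolynomial in
/-- The zero set of a nonzero multivariate polynomial over `ℂ` (variables `Fin n`) is null. -/
lemma mv_poly_null_fin : ∀ (n : ℕ) (p : MvPolynomial (Fin n) ℂ), p ≠ 0 →
    volume {x : Fin n → ℂ | eval x p = 0} = 0 := by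
  intro n
  induction n with
  | zero =>
    intro p hp
    obtain ⟨a, rfl⟩ := MvPolynomial.C_surjective (Fin 0) p
    have ha : a ≠ 0 := fun h => hp (by rw [h, map_zero])
    have : {x : Fin 0 → ℂ | eval x (C a) = 0} = ∅ := by
      ext x; simp [ha]
    rw [this, measure_empty]
  | succ n ih =>
    intro p hp
    set q : Polynomial (MvPolynomial (Fin n) ℂ) := MvPolynomial.finSuccEquiv ℂ n p with hqdef
    have hq : q ≠ 0 := by
      rw [hqdef, Ne, EmbeddingLike.map_eq_zero_iff]
      exact hp
    have hlead : q.leadingCoeff ≠ 0 := Polynomial.leadingCoeff_ne_zero.mpr hq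
    have hS : MeasurableSet {x : Fin (n+1) → ℂ | eval x p = 0} :=
      (isClosed_eq (MvPolynomial.continuous_eval p) continuous_const).measurableSet
    set e : (Fin (n+1) → ℂ) ≃ᵐ ((Fin n → ℂ) × ℂ) :=
      (MeasurableEquiv.piFinSuccAbove (fun _ : Fin (n+1) => ℂ) 0).trans MeasurableEquiv.prodComm
      with hedef
    have hmp : MeasurePreserving e volume
        ((volume : Measure (Fin n → ℂ)).prod (volume : Measure ℂ)) := by
      have h1 := measurePreserving_piFinSuccAbove (fun _ : Fin (n+1) => (volume : Measure ℂ)) 0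
      have h2 := Measure.measurePreserving_swap
        (μ := (volume : Measure ℂ)) (ν := Measure.pi fun _ : Fin n => (volume : Measure ℂ))
      have h3 := h2.comp h1
      exact ⟨e.measurable, h3.map_eq⟩
    have hpre : volume {x : Fin (n+1) → ℂ | eval x p = 0}
        = ((volume : Measure (Fin n → ℂ)).prod (volume : Measure ℂ))
          (⇑e.symm ⁻¹' {x : Fin (n+1) → ℂ | eval x p = 0}) := by
      rw [(hmp.symm e).measure_preimage_equiv]
    rw [hpre, Measure.measure_prod_null (e.symm.measurable hS)]
    have hae : ∀ᵐ s : Fin n → ℂ, eval s q.leadingCoeff ≠ 0 := by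
      rw [ae_iff]
      simpa using ih _ hlead
    filter_upwards [hae] with s hs
    have hsec : Prod.mk s ⁻¹' (⇑e.symm ⁻¹' {x : Fin (n+1) → ℂ | eval x p = 0})
        = {y : ℂ | Polynomial.eval y (q.map (eval s)) = 0} := by
      ext y
      have hcons : e.symm (s, y) = Fin.cons y s := by
        show (MeasurableEquiv.piFinSuccAbove (fun _ : Fin (n+1) => ℂ) 0).symm (y, s) = _
        simp [Fin.insertNthEquiv, Fin.insertNth_zero']
      simp only [Set.mem_preimage, Set.mem_setOf_eq, hcons,
        MvPolynomial.eval_eq_eval_mv_eval', ← hqdef]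
    simp only [Pi.zero_apply]
    rw [hsec]
    have hmapne : q.map (eval s) ≠ 0 := by
      intro h
      apply hs
      have h2 := congrArg (fun r => Polynomial.coeff r q.natDegree) h
      simp only [Polynomial.coeff_map, Polynomial.coeff_zero] at h2
      exact h2
    exact poly_one_var_null _ hmapne

open MvPolynomial in
/-- The zero set of a nonzero multivariate polynomial over `ℂ` is null. -/
lemma mv_poly_null {ι : Type*} [Fintype ι] (p : MvPolynomial ι ℂ) (hp : p ≠ 0) :
    volume {x : ι → ℂ | eval x p = 0} = 0 := by
  set φ : Fin (Fintype.card ι) ≃ ι := (Fintype.equivFin ι).symm with hφ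
  have hmp := volume_measurePreserving_piCongrLeft (fun _ : ι => ℂ) φ
  have hS : MeasurableSet {x : ι → ℂ | eval x p = 0} :=
    (isClosed_eq (MvPolynomial.continuous_eval p) continuous_const).measurableSet
  rw [← hmp.measure_preimage_equiv]
  have hco : ∀ g : Fin (Fintype.card ι) → ℂ,
      ⇑(MeasurableEquiv.piCongrLeft (fun _ : ι => ℂ) φ) g = g ∘ ⇑φ.symm := by
    intro g
    funext a
    have h1 := Equiv.piCongrLeft_apply_apply (fun _ : ι => ℂ) φ g (φ.symm a)
    rw [Equiv.apply_symm_apply] at h1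
    exact h1
  have hset : ⇑(MeasurableEquiv.piCongrLeft (fun _ : ι => ℂ) φ) ⁻¹' {x : ι → ℂ | eval x p = 0}
      = {g : Fin (Fintype.card ι) → ℂ | eval g (rename ⇑φ.symm p) = 0} := by
    ext g
    simp only [Set.mem_preimage, Set.mem_setOf_eq, hco g, MvPolynomial.eval_rename]
  rw [hset]
  apply mv_poly_null_fin
  intro h
  exact hp ((MvPolynomial.rename_injective (⇑φ.symm) φ.symm.injective) (by rw [h, map_zero]))

/-- Uncurrying measurable equivalence between matrices (as functions) and functions on pairs. -/
def funCurryEquiv (L M : ℕ) : (Fin L × Fin M → ℂ) ≃ᵐ (Fin L → Fin M → ℂ) where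
  toEquiv := Equiv.curry (Fin L) (Fin M) ℂ
  measurable_toFun := measurable_pi_lambda _ fun i => measurable_pi_lambda _ fun j =>
    measurable_pi_apply (i, j)
  measurable_invFun := measurable_pi_lambda _ fun ij =>
    (measurable_pi_apply ij.2).comp (measurable_pi_apply ij.1)

lemma funCurryEquiv_measurePreserving (L M : ℕ) :
    MeasurePreserving (funCurryEquiv L M) volume volume := by
  have hsymm : Measure.map (⇑(funCurryEquiv L M).symm)
      (volume : Measure (Fin L → Fin M → ℂ)) = (volume : Measure (Fin L × Fin M → ℂ)) := by
    rw [show (volume : Measure (Fin L × Fin M → ℂ)) = Measure.pi fun _ => volume from volume_pi]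
    refine Eq.symm (Measure.pi_eq fun s hs => ?_)
    rw [Measure.map_apply (funCurryEquiv L M).symm.measurable
      (MeasurableSet.univ_pi fun ij => hs ij)]
    have hpre : ⇑(funCurryEquiv L M).symm ⁻¹' Set.pi Set.univ s
        = Set.pi Set.univ fun i => Set.pi Set.univ fun j => s (i, j) := by
      ext Z
      simp only [Set.mem_preimage, Set.mem_pi, Set.mem_univ, forall_const, Prod.forall]
      exact Iff.rfl
    rw [hpre, show (volume : Measure (Fin L → Fin M → ℂ))
        = Measure.pi fun _ : Fin L => (volume : Measure (Fin M → ℂ)) from volume_pi]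
    rw [Measure.pi_pi]
    simp_rw [show (volume : Measure (Fin M → ℂ)) = Measure.pi fun _ => volume from volume_pi,
      Measure.pi_pi]
    exact (Fintype.prod_prod_type (fun ij : Fin L × Fin M => volume (s ij))).symm
  exact ((⟨(funCurryEquiv L M).symm.measurable, hsymm⟩ :
    MeasurePreserving (funCurryEquiv L M).symm volume volume).symm
      (funCurryEquiv L M).symm)

theorem selected_rows_invertible_ae
    (L_act L M : ℕ) (hLact : 0 < L_act) (hL : 0 < L) (hM : 0 < M) (hML : M ≤ L_act)
    (A : Matrix (Fin L_act) (Fin L) ℂ) (hA : A.rank = L_act)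
    (σ : Fin M → Fin L_act) (hσ : Function.Injective σ) :
    volume {Z : Matrix (Fin L) (Fin M) ℂ | ¬ IsUnit ((A * Z).submatrix σ id)} = 0 := by
  classical
  set B : Matrix (Fin M) (Fin L) ℂ := A.submatrix σ id with hB
  -- A has a right inverse since it has full row rank
  obtain ⟨C, hC⟩ : ∃ C : Matrix (Fin L) (Fin L_act) ℂ, A * C = 1 := by
    have hrange : LinearMap.range A.mulVecLin = ⊤ := by
      apply Submodule.eq_top_of_finrank_eq
      rw [show Module.finrank ℂ ↥(LinearMap.range A.mulVecLin) = A.rank from rfl, hA,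
        Module.finrank_fin_fun]
    obtain ⟨g, hg⟩ := A.mulVecLin.exists_rightInverse_of_surjective hrange
    refine ⟨LinearMap.toMatrix' g, ?_⟩
    apply Matrix.toLin'.injective
    rw [Matrix.toLin'_mul, Matrix.toLin'_toMatrix', Matrix.toLin'_one, Matrix.toLin'_apply']
    exact hg
  -- hence B has a right inverse
  set D : Matrix (Fin L) (Fin M) ℂ := C.submatrix id σ with hD
  have hBD : B * D = 1 := by
    rw [hB, hD, ← Matrix.submatrix_mul A C σ id σ Function.bijective_id, hC]
    ext i j
    simp [Matrix.one_apply, hσ.eq_iff]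
  -- the determinant polynomial
  set P : MvPolynomial (Fin L × Fin M) ℂ :=
    (Matrix.of fun i j : Fin M =>
      ∑ k : Fin L, MvPolynomial.C (B i k) * MvPolynomial.X (k, j)).det with hP
  have hPeval : ∀ f : Fin L × Fin M → ℂ,
      MvPolynomial.eval f P = (B * Matrix.of (funCurryEquiv L M f)).det := by
    intro f
    rw [hP, RingHom.map_det]
    congr 1
    ext i j
    simp [Matrix.mul_apply, funCurryEquiv, Equiv.curry]
  have hPne : P ≠ 0 := by
    intro h
    have h1 := hPeval ((funCurryEquiv L M).symm D)
    rw [h, map_zero, show funCurryEquiv L M ((funCurryEquiv L M).symm D) = D from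
      (funCurryEquiv L M).apply_symm_apply D] at h1
    rw [show Matrix.of (D : Fin L → Fin M → ℂ) = D from rfl, hBD, Matrix.det_one] at h1
    exact one_ne_zero h1.symm
  -- reduce to the polynomial zero set
  have hsub : ∀ Z : Matrix (Fin L) (Fin M) ℂ, (A * Z).submatrix σ id = B * Z := by
    intro Z
    rw [hB, Matrix.submatrix_mul A Z σ id id Function.bijective_id, Matrix.submatrix_id_id]
  have hset : {Z : Matrix (Fin L) (Fin M) ℂ | ¬ IsUnit ((A * Z).submatrix σ id)}
      = {Z : Matrix (Fin L) (Fin M) ℂ | (B * Z).det = 0} := by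
    ext Z
    simp only [Set.mem_setOf_eq, hsub Z, Matrix.isUnit_iff_isUnit_det, isUnit_iff_ne_zero,
      not_not]
  rw [hset]
  have hMP := funCurryEquiv_measurePreserving L M
  have hkey : volume {Z : Matrix (Fin L) (Fin M) ℂ | (B * Z).det = 0}
      = volume (⇑(funCurryEquiv L M) ⁻¹'
          {Z : Fin L → Fin M → ℂ | (B * Matrix.of Z).det = 0}) := by
    exact (hMP.measure_preimage_equiv _).symm
  rw [hkey]
  have hfin : (⇑(funCurryEquiv L M) ⁻¹' {Z : Fin L → Fin M → ℂ | (B * Matrix.of Z).det = 0})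
      = {f : Fin L × Fin M → ℂ | MvPolynomial.eval f P = 0} := by
    ext f
    simp only [Set.mem_preimage, Set.mem_setOf_eq, hPeval f]
  rw [hfin]
  exact mv_poly_null P hPne
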